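/- arXiv:2302.03283 — 3 statements merged into one kernel-verified Lean document; each statement's English description precedes it below -/
import Mathlib

section
/- Let λξ ∈ ℤ² with |ξ| = 1 and let g(x) = a(x)cos(λξ·x) for a smooth function a on 𝕋². Then Λg = λg + (ξ·∇a)sin(λξ·x) + T_{1,λξ}[a]cos(λξ·x) + T_{2,λξ}[a]sin(λξ·x), where T_{1,λξ} and T_{2,λξ} are the Fourier multipliers with symbols ( (|λξ+k| + |λξ−k|)/2 − λ ) and i( (|λξ+k| − |λξ−k|)/2 − ξ·k ) respectively. -/
/-- The character `e^{i k·x}` for `k ∈ ℤ²`, `x ∈ ℝ²` (trigonometric polynomials on 𝕋²). -/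
noncomputable def ee (k : ℤ × ℤ) (x : ℝ × ℝ) : ℂ :=
  Complex.exp (Complex.I * Complex.ofReal ((k.1 : ℝ) * x.1 + (k.2 : ℝ) * x.2))

/-- The Euclidean norm `|k|` of a lattice frequency. -/
noncomputable def nrm (k : ℤ × ℤ) : ℝ := Real.sqrt (((k.1 : ℝ)) ^ 2 + ((k.2 : ℝ)) ^ 2)

lemma ee_add (j k : ℤ × ℤ) (x : ℝ × ℝ) : ee (j + k) x = ee j x * ee k x := by
  unfold ee
  rw [← Complex.exp_add]
  congr 1
  simp only [Prod.fst_add, Prod.snd_add]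
  push_cast
  ring

lemma nrm_comm (j k : ℤ × ℤ) : nrm (j + k) = nrm (k + j) := by rw [add_comm]

lemma nrm_neg_sub (j k : ℤ × ℤ) : nrm (j - k) = nrm (k - j) := by
  unfold nrm
  congr 1
  simp only [Prod.fst_sub, Prod.snd_sub]
  push_cast
  ring

/-- Lemma on Λ of a modulated wave: for `g = a·cos(λξ·x)` with
`a = ∑_{k∈S} c k e^{ik·x}`,
`Λg = λg + (ξ·∇a)sin(λξ·x) + T_{1,λξ}[a]cos(λξ·x) + T_{2,λξ}[a]sin(λξ·x)`,
where `Λg` is computed frequency-by-frequency via the multiplier `|k|`. -/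
theorem lambda_of_modulated_wave
    (lam : ℝ) (hlam : 0 < lam) (ξ : ℝ × ℝ) (hξ : ξ.1 ^ 2 + ξ.2 ^ 2 = 1)
    (K : ℤ × ℤ) (hK : ((K.1 : ℝ), (K.2 : ℝ)) = lam • ξ)
    (S : Finset (ℤ × ℤ)) (c : ℤ × ℤ → ℂ) :
    ∀ x : ℝ × ℝ,
      -- Λ g
      (∑ k ∈ S, c k / 2 * (Complex.ofReal (nrm (k + K)) * ee (k + K) x
          + Complex.ofReal (nrm (k - K)) * ee (k - K) x))
      =
      -- λ g
      Complex.ofReal lam * ((∑ k ∈ S, c k * ee k x)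
          * Complex.ofReal (Real.cos (lam * (ξ.1 * x.1 + ξ.2 * x.2))))
      -- (ξ·∇a) sin(λξ·x)
      + (∑ k ∈ S, (Complex.I * Complex.ofReal (ξ.1 * (k.1 : ℝ) + ξ.2 * (k.2 : ℝ))) * c k * ee k x)
          * Complex.ofReal (Real.sin (lam * (ξ.1 * x.1 + ξ.2 * x.2)))
      -- T_{1,λξ}[a] cos(λξ·x), symbol ((|λξ+k| + |λξ-k|)/2 - λ)
      + (∑ k ∈ S, Complex.ofReal ((nrm (K + k) + nrm (K - k)) / 2 - lam) * c k * ee k x)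
          * Complex.ofReal (Real.cos (lam * (ξ.1 * x.1 + ξ.2 * x.2)))
      -- T_{2,λξ}[a] sin(λξ·x), symbol i((|λξ+k| - |λξ-k|)/2 - ξ·k)
      + (∑ k ∈ S, (Complex.I * Complex.ofReal
            ((nrm (K + k) - nrm (K - k)) / 2 - (ξ.1 * (k.1 : ℝ) + ξ.2 * (k.2 : ℝ)))) * c k * ee k x)
          * Complex.ofReal (Real.sin (lam * (ξ.1 * x.1 + ξ.2 * x.2))) := by
  intro x
  have h1 : (K.1 : ℝ) = lam * ξ.1 := by
    have := congrArg Prod.fst hK; simpa using this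
  have h2 : (K.2 : ℝ) = lam * ξ.2 := by
    have := congrArg Prod.snd hK; simpa using this
  set θ : ℝ := lam * (ξ.1 * x.1 + ξ.2 * x.2) with hθ
  have harg : ((K.1 : ℝ) * x.1 + (K.2 : ℝ) * x.2) = θ := by
    rw [h1, h2, hθ]; ring
  have hEK : ee K x = Complex.cos θ + Complex.sin θ * Complex.I := by
    unfold ee
    rw [harg, mul_comm, Complex.exp_mul_I]
  have hEnK : ee (-K) x = Complex.cos θ - Complex.sin θ * Complex.I := by
    unfold ee
    have harg2 : (((-K).1 : ℝ) * x.1 + ((-K).2 : ℝ) * x.2) = -θ := by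
      simp only [Prod.fst_neg, Prod.snd_neg]
      push_cast
      rw [h1, h2, hθ]; ring
    rw [harg2, Complex.ofReal_neg, mul_comm, neg_mul, ← neg_mul, Complex.exp_mul_I]
    push_cast
    simp [Complex.cos_neg, Complex.sin_neg]
    ring
  rw [Complex.ofReal_cos, Complex.ofReal_sin]
  rw [← mul_assoc, Finset.mul_sum, Finset.sum_mul, Finset.sum_mul, Finset.sum_mul, Finset.sum_mul,
    ← Finset.sum_add_distrib, ← Finset.sum_add_distrib, ← Finset.sum_add_distrib]
  refine Finset.sum_congr rfl fun k hk => ?_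
  have e1 : ee (k + K) x = ee k x * (Complex.cos θ + Complex.sin θ * Complex.I) := by
    rw [ee_add, hEK]
  have e2 : ee (k - K) x = ee k x * (Complex.cos θ - Complex.sin θ * Complex.I) := by
    rw [sub_eq_add_neg, ee_add, hEnK]
  rw [e1, e2, nrm_comm k K, nrm_neg_sub k K]
  push_cast
  ring
end

section
/- Let ξ₁ = (3/5, 4/5) and ξ₂ = (1,0), and let R₁^o, R₂^o be the Fourier multipliers with symbols 25(k₂²−k₁²)/(12|k|²) and 7(k₂²−k₁²)/(12|k|²) + 4k₁k₂/|k|² respectively. Then for any mean-zero G ∈ C₀^∞(𝕋²) there exists a function F such that ∇G = Σ_{j=1}^{2} ξ_j^⊥ (ξ_j·∇)(R_j^o G) + ∇^⊥ F. -/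
/-- symbol of R₁^o -/
noncomputable def m1 (k : ℤ × ℤ) : ℝ :=
  25 * ((k.2 : ℝ) ^ 2 - (k.1 : ℝ) ^ 2) / (12 * ((k.1 : ℝ) ^ 2 + (k.2 : ℝ) ^ 2))

/-- symbol of R₂^o -/
noncomputable def m2 (k : ℤ × ℤ) : ℝ :=
  7 * ((k.2 : ℝ) ^ 2 - (k.1 : ℝ) ^ 2) / (12 * ((k.1 : ℝ) ^ 2 + (k.2 : ℝ) ^ 2))
    + 4 * (k.1 : ℝ) * (k.2 : ℝ) / ((k.1 : ℝ) ^ 2 + (k.2 : ℝ) ^ 2)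

noncomputable def aa (k : ℤ × ℤ) : ℝ :=
  (-(((k.2:ℝ)^2 - (k.1:ℝ)^2) * (16*(k.1:ℝ)^2 + 24*(k.1:ℝ)*(k.2:ℝ) + 16*(k.2:ℝ)^2))
      - 48*(k.1:ℝ)^3*(k.2:ℝ)) / (12*((k.1:ℝ)^2+(k.2:ℝ)^2)^2)

noncomputable def ll (k : ℤ × ℤ) : ℝ × ℝ →L[ℝ] ℝ :=
  (k.1:ℝ) • ContinuousLinearMap.fst ℝ ℝ ℝ + (k.2:ℝ) • ContinuousLinearMap.snd ℝ ℝ ℝ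

lemma ll_apply (k : ℤ × ℤ) (v : ℝ × ℝ) : ll k v = (k.1:ℝ) * v.1 + (k.2:ℝ) * v.2 := by
  simp [ll, smul_eq_mul]

lemma hasFDerivAt_ee (k : ℤ × ℤ) (x : ℝ × ℝ) :
    HasFDerivAt (ee k) ((ee k x) • (Complex.I • (Complex.ofRealCLM.comp (ll k)))) x := by
  have h1 : HasFDerivAt (fun y : ℝ × ℝ => Complex.I * (Complex.ofRealCLM.comp (ll k)) y)
      (Complex.I • (Complex.ofRealCLM.comp (ll k))) x :=
    ((Complex.ofRealCLM.comp (ll k)).hasFDerivAt).const_mul Complex.I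
  have h2 := h1.cexp
  have he : ∀ y : ℝ × ℝ, Complex.exp (Complex.I * (Complex.ofRealCLM.comp (ll k)) y) = ee k y := by
    intro y
    simp [ee, ll_apply]
  rw [show (fun y : ℝ × ℝ => Complex.exp (Complex.I * (Complex.ofRealCLM.comp (ll k)) y)) = ee k
      from funext he, he x] at h2
  exact h2

lemma nsq_ne (k : ℤ × ℤ) (hk : k ≠ (0,0)) : ((k.1:ℝ)^2 + (k.2:ℝ)^2) ≠ 0 := by
  have : k.1 ≠ 0 ∨ k.2 ≠ 0 := by
    by_contra h
    push_neg at h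
    exact hk (Prod.ext h.1 h.2)
  rcases this with h | h
  · have : (k.1:ℝ) ≠ 0 := Int.cast_ne_zero.mpr h
    positivity
  · have : (k.2:ℝ) ≠ 0 := Int.cast_ne_zero.mpr h
    positivity

lemma key1 (k : ℤ × ℤ) (hk : k ≠ (0,0)) :
    (k.1:ℝ) = (-(4:ℝ)/5) * ((3/5)*(k.1:ℝ) + (4/5)*(k.2:ℝ)) * m1 k - (k.2:ℝ) * aa k := by
  have hn := nsq_ne k hk
  unfold m1 aa
  field_simp
  ring

lemma key2 (k : ℤ × ℤ) (hk : k ≠ (0,0)) :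
    (k.2:ℝ) = ((3:ℝ)/5) * ((3/5)*(k.1:ℝ) + (4/5)*(k.2:ℝ)) * m1 k
      + (k.1:ℝ) * m2 k + (k.1:ℝ) * aa k := by
  have hn := nsq_ne k hk
  unfold m1 m2 aa
  field_simp
  ring

/-- Algebraic Lemma: for any mean-zero trigonometric polynomial
`G = ∑_{k∈S} c k e^{ik·x}` there is `F` with
`∇G = ξ₁^⊥(ξ₁·∇)(R₁^o G) + ξ₂^⊥(ξ₂·∇)(R₂^o G) + ∇^⊥F`,
with `ξ₁ = (3/5,4/5)`, `ξ₂ = (1,0)`. -/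
theorem algebraic_lemma_decomposition
    (S : Finset (ℤ × ℤ)) (hS : ((0, 0) : ℤ × ℤ) ∉ S) (c : ℤ × ℤ → ℂ) :
    ∃ F : ℝ × ℝ → ℂ, Differentiable ℝ F ∧ ∀ x : ℝ × ℝ,
      -- ∇G
      ((∑ k ∈ S, Complex.I * Complex.ofReal (k.1 : ℝ) * c k * ee k x,
        ∑ k ∈ S, Complex.I * Complex.ofReal (k.2 : ℝ) * c k * ee k x) : ℂ × ℂ)
      =
      -- ξ₁^⊥ (ξ₁·∇)(R₁^o G), ξ₁^⊥ = (-4/5, 3/5)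
      ((Complex.ofReal (-(4 : ℝ) / 5)) * (∑ k ∈ S, Complex.I
            * Complex.ofReal ((3 / 5) * (k.1 : ℝ) + (4 / 5) * (k.2 : ℝ))
            * Complex.ofReal (m1 k) * c k * ee k x),
        (Complex.ofReal ((3 : ℝ) / 5)) * (∑ k ∈ S, Complex.I
            * Complex.ofReal ((3 / 5) * (k.1 : ℝ) + (4 / 5) * (k.2 : ℝ))
            * Complex.ofReal (m1 k) * c k * ee k x))
      -- ξ₂^⊥ (ξ₂·∇)(R₂^o G), ξ₂^⊥ = (0,1)
      + ((0 : ℂ),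
          ∑ k ∈ S, Complex.I * Complex.ofReal ((k.1 : ℝ))
            * Complex.ofReal (m2 k) * c k * ee k x)
      -- ∇^⊥ F = (-∂₂F, ∂₁F)
      + (-(fderiv ℝ F x ((0 : ℝ), (1 : ℝ))), fderiv ℝ F x ((1 : ℝ), (0 : ℝ))) := by
  refine ⟨fun y => ∑ k ∈ S, ((aa k : ℂ) * c k) * ee k y, ?_, ?_⟩
  case _ =>
    intro x
    exact (HasFDerivAt.fun_sum (fun k _ => (hasFDerivAt_ee k x).const_mul ((aa k : ℂ) * c k))).differentiableAt
  intro x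
  have hF := HasFDerivAt.fun_sum (fun k (_ : k ∈ S) => (hasFDerivAt_ee k x).const_mul ((aa k : ℂ) * c k))
  rw [hF.fderiv]
  have hD1 : (∑ k ∈ S, ((aa k : ℂ) * c k) • ((ee k x) • (Complex.I • (Complex.ofRealCLM.comp (ll k))))) ((0:ℝ),(1:ℝ))
      = ∑ k ∈ S, ((aa k : ℂ) * c k) * (ee k x * (Complex.I * ((k.2:ℝ) : ℂ))) := by
    simp [ContinuousLinearMap.sum_apply, ll_apply, smul_eq_mul]
  have hD2 : (∑ k ∈ S, ((aa k : ℂ) * c k) • ((ee k x) • (Complex.I • (Complex.ofRealCLM.comp (ll k))))) ((1:ℝ),(0:ℝ))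
      = ∑ k ∈ S, ((aa k : ℂ) * c k) * (ee k x * (Complex.I * ((k.1:ℝ) : ℂ))) := by
    simp [ContinuousLinearMap.sum_apply, ll_apply, smul_eq_mul]
  rw [Prod.ext_iff]
  constructor
  · simp only [Prod.mk_add_mk]
    rw [hD1, Finset.mul_sum, add_zero, ← Finset.sum_neg_distrib, ← Finset.sum_add_distrib]
    refine Finset.sum_congr rfl (fun k hk => ?_)
    have hk0 : k ≠ (0,0) := fun h => hS (h ▸ hk)
    have h := congrArg (Complex.ofReal) (key1 k hk0)
    push_cast at h ⊢
    linear_combination (Complex.I * c k * ee k x) * h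
  · simp only [Prod.mk_add_mk]
    rw [hD2, Finset.mul_sum, ← Finset.sum_add_distrib, ← Finset.sum_add_distrib]
    refine Finset.sum_congr rfl (fun k hk => ?_)
    have hk0 : k ≠ (0,0) := fun h => hS (h ▸ hk)
    have h := congrArg (Complex.ofReal) (key2 k hk0)
    push_cast at h ⊢
    linear_combination (Complex.I * c k * ee k x) * h
end

section
/- Let f ∈ Ḣ^{−1/2}(𝕋²) and ψ ∈ C^∞(𝕋²). Then the commutator [∇^⊥Λ^{-1}, ∇ψ]f = ∇^⊥Λ^{-1}(f∇ψ) − (∇^⊥Λ^{-1}f)·∇ψ belongs to Ḣ^{1/2}(𝕋²), with ‖[∇^⊥Λ^{-1}, ∇ψ]f‖_{Ḣ^{1/2}} ≲_ψ ‖f‖_{Ḣ^{−1/2}}. -/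
open scoped Classical Pointwise

/-- the (vector) symbol `i k^⊥/|k|` of `∇^⊥Λ^{-1}` -/
noncomputable def Msym (k : ℤ × ℤ) : ℂ × ℂ :=
  if k = 0 then 0
  else (Complex.I * Complex.ofReal (-(k.2 : ℝ) / nrm k),
        Complex.I * Complex.ofReal ((k.1 : ℝ) / nrm k))

/-- squared homogeneous Sobolev norm `‖·‖_{Ḣ^s}²` of a trigonometric polynomial -/
noncomputable def hsNormSq (s : ℝ) (S : Finset (ℤ × ℤ)) (c : ℤ × ℤ → ℂ) : ℝ :=
  ∑ k ∈ S, nrm k ^ (2 * s) * ‖c k‖ ^ 2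

/-- Fourier coefficients of the commutator `[∇^⊥Λ^{-1}, ∇ψ]f = ∇^⊥Λ^{-1}(f∇ψ) - (∇^⊥Λ^{-1}f)·∇ψ`
for `f = ∑_{k∈S} c k e^{ik·x}` and `ψ` with coefficients `d`. -/
noncomputable def commCoef (S : Finset (ℤ × ℤ)) (c d : ℤ × ℤ → ℂ) (q : ℤ × ℤ) : ℂ :=
  ∑ k ∈ S, c k * d (q - k) *
    (Complex.I * Complex.ofReal (((q - k).1 : ℝ)) * ((Msym q).1 - (Msym k).1)
      + Complex.I * Complex.ofReal (((q - k).2 : ℝ)) * ((Msym q).2 - (Msym k).2))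

/-! ### auxiliary lemmas -/

noncomputable def mker (q k : ℤ × ℤ) : ℂ :=
  Complex.I * Complex.ofReal (((q - k).1 : ℝ)) * ((Msym q).1 - (Msym k).1)
    + Complex.I * Complex.ofReal (((q - k).2 : ℝ)) * ((Msym q).2 - (Msym k).2)

noncomputable def sig1 (k : ℤ × ℤ) : ℝ := if k = 0 then 0 else -(k.2 : ℝ) / nrm k
noncomputable def sig2 (k : ℤ × ℤ) : ℝ := if k = 0 then 0 else (k.1 : ℝ) / nrm k

lemma Msym_fst (k : ℤ × ℤ) : (Msym k).1 = Complex.I * (sig1 k : ℂ) := by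
  unfold Msym sig1; split_ifs <;> simp

lemma Msym_snd (k : ℤ × ℤ) : (Msym k).2 = Complex.I * (sig2 k : ℂ) := by
  unfold Msym sig2; split_ifs <;> simp

lemma nrm_eq_abs (k : ℤ × ℤ) : nrm k = ‖(⟨(k.1 : ℝ), (k.2 : ℝ)⟩ : ℂ)‖ := by
  rw [nrm, Complex.norm_def, Complex.normSq_mk]; ring_nf

lemma nrm_nonneg (k : ℤ × ℤ) : 0 ≤ nrm k := Real.sqrt_nonneg _

lemma nrm_pos {k : ℤ × ℤ} (hk : k ≠ 0) : 0 < nrm k := by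
  rcases k with ⟨a, b⟩
  have : a ≠ 0 ∨ b ≠ 0 := by
    by_contra h; push_neg at h; exact hk (by simp [h.1, h.2, Prod.ext_iff])
  have h1 : (0:ℝ) < (a:ℝ)^2 + (b:ℝ)^2 := by
    rcases this with h | h
    · have : (0:ℝ) < (a:ℝ)^2 := by positivity
      nlinarith [sq_nonneg ((b:ℝ))]
    · have : (0:ℝ) < (b:ℝ)^2 := by positivity
      nlinarith [sq_nonneg ((a:ℝ))]
  exact Real.sqrt_pos.mpr h1

lemma abs_fst_le (k : ℤ × ℤ) : |(k.1 : ℝ)| ≤ nrm k := by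
  rw [nrm, ← Real.sqrt_sq_eq_abs]
  exact Real.sqrt_le_sqrt (by nlinarith [sq_nonneg ((k.2:ℝ))])

lemma abs_snd_le (k : ℤ × ℤ) : |(k.2 : ℝ)| ≤ nrm k := by
  rw [nrm, ← Real.sqrt_sq_eq_abs]
  exact Real.sqrt_le_sqrt (by nlinarith [sq_nonneg ((k.1:ℝ))])

lemma nrm_sub_nrm_le (a b : ℤ × ℤ) : |nrm a - nrm b| ≤ nrm (a - b) := by
  rw [nrm_eq_abs, nrm_eq_abs, nrm_eq_abs]
  have := abs_norm_sub_norm_le (⟨(a.1:ℝ), (a.2:ℝ)⟩ : ℂ) ⟨(b.1:ℝ), (b.2:ℝ)⟩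
  rw [show (⟨(a.1:ℝ), (a.2:ℝ)⟩ : ℂ) - ⟨(b.1:ℝ), (b.2:ℝ)⟩ = ⟨((a - b).1:ℝ), ((a - b).2:ℝ)⟩ from by
    apply Complex.ext <;> simp] at this
  exact this

/-- generic quotient difference bound -/
lemma quot_diff_bound {x y A B D : ℝ} (hA : 0 < A) (hB : 0 < B) (hx : |x| ≤ A)
    (hy : |y| ≤ B) (hxy : |x - y| ≤ D) (hAB : |A - B| ≤ D) :
    |x / A - y / B| ≤ 2 * D / A ∧ |x / A - y / B| ≤ 2 * D / B := by
  have h1 : x / A - y / B = (x * B - y * A) / (A * B) := by field_simp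
  have key1 : |x * B - y * A| ≤ 2 * D * B := by
    have h2 : x * B - y * A = (x - y) * B + y * (B - A) := by ring
    rw [h2]
    calc |(x - y) * B + y * (B - A)| ≤ |(x - y) * B| + |y * (B - A)| := abs_add_le _ _
      _ = |x - y| * B + |y| * |B - A| := by
          rw [abs_mul, abs_mul, abs_of_pos hB]
      _ ≤ D * B + B * D := by
          refine add_le_add (mul_le_mul_of_nonneg_right hxy hB.le) ?_
          have : |B - A| = |A - B| := abs_sub_comm _ _
          rw [this]
          exact mul_le_mul hy hAB (abs_nonneg _) hB.le
      _ = 2 * D * B := by ring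
  have key2 : |x * B - y * A| ≤ 2 * D * A := by
    have h2 : x * B - y * A = (x - y) * A + x * (B - A) := by ring
    rw [h2]
    calc |(x - y) * A + x * (B - A)| ≤ |(x - y) * A| + |x * (B - A)| := abs_add_le _ _
      _ = |x - y| * A + |x| * |B - A| := by
          rw [abs_mul, abs_mul, abs_of_pos hA]
      _ ≤ D * A + A * D := by
          refine add_le_add (mul_le_mul_of_nonneg_right hxy hA.le) ?_
          have : |B - A| = |A - B| := abs_sub_comm _ _
          rw [this]
          exact mul_le_mul hx hAB (abs_nonneg _) hA.le
      _ = 2 * D * A := by ring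
  constructor
  · rw [h1, abs_div, abs_of_pos (mul_pos hA hB)]
    rw [div_le_div_iff₀ (mul_pos hA hB) hA]
    calc |x * B - y * A| * A ≤ (2 * D * B) * A := by
          exact mul_le_mul_of_nonneg_right key1 hA.le
      _ = 2 * D * (A * B) := by ring
  · rw [h1, abs_div, abs_of_pos (mul_pos hA hB)]
    rw [div_le_div_iff₀ (mul_pos hA hB) hB]
    calc |x * B - y * A| * B ≤ (2 * D * A) * B := by
          exact mul_le_mul_of_nonneg_right key2 hB.le
      _ = 2 * D * (A * B) := by ring

lemma sig1_diff {a b : ℤ × ℤ} (ha : a ≠ 0) (hb : b ≠ 0) :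
    |sig1 a - sig1 b| ≤ 2 * nrm (a - b) / nrm a ∧
      |sig1 a - sig1 b| ≤ 2 * nrm (a - b) / nrm b := by
  have hA := nrm_pos ha
  have hB := nrm_pos hb
  rw [sig1, sig1, if_neg ha, if_neg hb]
  refine quot_diff_bound hA hB ?_ ?_ ?_ (nrm_sub_nrm_le a b)
  · rw [abs_neg]; exact abs_snd_le a
  · rw [abs_neg]; exact abs_snd_le b
  · have h : -(a.2:ℝ) - -(b.2:ℝ) = -(((a - b).2 : ℤ) : ℝ) := by
      rw [Prod.snd_sub]; push_cast; ring
    rw [h, abs_neg]; exact abs_snd_le _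

lemma sig2_diff {a b : ℤ × ℤ} (ha : a ≠ 0) (hb : b ≠ 0) :
    |sig2 a - sig2 b| ≤ 2 * nrm (a - b) / nrm a ∧
      |sig2 a - sig2 b| ≤ 2 * nrm (a - b) / nrm b := by
  have hA := nrm_pos ha
  have hB := nrm_pos hb
  rw [sig2, sig2, if_neg ha, if_neg hb]
  refine quot_diff_bound hA hB ?_ ?_ ?_ (nrm_sub_nrm_le a b)
  · exact abs_fst_le a
  · exact abs_fst_le b
  · have h : (a.1:ℝ) - (b.1:ℝ) = (((a - b).1 : ℤ) : ℝ) := by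
      rw [Prod.fst_sub]; push_cast; ring
    rw [h]; exact abs_fst_le _

lemma mker_norm_le (q k : ℤ × ℤ) :
    ‖mker q k‖ ≤ nrm (q - k) * (|sig1 q - sig1 k| + |sig2 q - sig2 k|) := by
  have h1 : (Msym q).1 - (Msym k).1 = Complex.I * ((sig1 q - sig1 k : ℝ) : ℂ) := by
    rw [Msym_fst, Msym_fst]; push_cast; ring
  have h2 : (Msym q).2 - (Msym k).2 = Complex.I * ((sig2 q - sig2 k : ℝ) : ℂ) := by
    rw [Msym_snd, Msym_snd]; push_cast; ring
  rw [mker, h1, h2]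
  calc ‖Complex.I * (((q - k).1 : ℝ) : ℂ) * (Complex.I * ((sig1 q - sig1 k : ℝ) : ℂ))
        + Complex.I * (((q - k).2 : ℝ) : ℂ) * (Complex.I * ((sig2 q - sig2 k : ℝ) : ℂ))‖
      ≤ ‖Complex.I * (((q - k).1 : ℝ) : ℂ) * (Complex.I * ((sig1 q - sig1 k : ℝ) : ℂ))‖
        + ‖Complex.I * (((q - k).2 : ℝ) : ℂ) * (Complex.I * ((sig2 q - sig2 k : ℝ) : ℂ))‖ :=
        norm_add_le _ _
    _ = |((q - k).1 : ℝ)| * |sig1 q - sig1 k| + |((q - k).2 : ℝ)| * |sig2 q - sig2 k| := by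
        simp [norm_mul, Complex.norm_real, Complex.norm_I, ← Complex.ofReal_sub]
    _ ≤ nrm (q - k) * |sig1 q - sig1 k| + nrm (q - k) * |sig2 q - sig2 k| := by
        gcongr
        · exact abs_fst_le _
        · exact abs_snd_le _
    _ = nrm (q - k) * (|sig1 q - sig1 k| + |sig2 q - sig2 k|) := by ring

lemma mker_key {q k : ℤ × ℤ} (hk : k ≠ 0) :
    nrm q * ‖mker q k‖ ^ 2 ≤ 16 * nrm (q - k) ^ 4 * (nrm k)⁻¹ := by
  by_cases hq : q = 0
  · have : nrm q = 0 := by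
      subst hq; simp [nrm]
    rw [this, zero_mul]
    have h1 := nrm_nonneg (q - k)
    have h2 := nrm_nonneg k
    positivity
  · have hA := nrm_pos hq
    have hB := nrm_pos hk
    set A := nrm q
    set B := nrm k
    set D := nrm (q - k)
    have hD : 0 ≤ D := nrm_nonneg _
    have hM : 0 ≤ ‖mker q k‖ := norm_nonneg _
    have hMA : ‖mker q k‖ * A ≤ 4 * D ^ 2 := by
      have h := mker_norm_le q k
      have hs1 := (sig1_diff hq hk).1
      have hs2 := (sig2_diff hq hk).1
      have hle : ‖mker q k‖ ≤ D * (2 * D / A + 2 * D / A) :=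
        h.trans (by gcongr)
      calc ‖mker q k‖ * A ≤ D * (2 * D / A + 2 * D / A) * A :=
            mul_le_mul_of_nonneg_right hle hA.le
        _ = 4 * D ^ 2 * (A / A) := by ring
        _ = 4 * D ^ 2 := by rw [div_self hA.ne']; ring
    have hMB : ‖mker q k‖ * B ≤ 4 * D ^ 2 := by
      have h := mker_norm_le q k
      have hs1 := (sig1_diff hq hk).2
      have hs2 := (sig2_diff hq hk).2
      have hle : ‖mker q k‖ ≤ D * (2 * D / B + 2 * D / B) :=
        h.trans (by gcongr)
      calc ‖mker q k‖ * B ≤ D * (2 * D / B + 2 * D / B) * B :=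
            mul_le_mul_of_nonneg_right hle hB.le
        _ = 4 * D ^ 2 * (B / B) := by ring
        _ = 4 * D ^ 2 := by rw [div_self hB.ne']; ring
    rw [← div_eq_mul_inv, le_div_iff₀ hB]
    have h := mul_le_mul hMA hMB (by positivity) (by positivity)
    calc A * ‖mker q k‖ ^ 2 * B = (‖mker q k‖ * A) * (‖mker q k‖ * B) := by ring
      _ ≤ (4 * D ^ 2) * (4 * D ^ 2) := h
      _ = 16 * D ^ 4 := by ring




/-- for smooth `ψ` the commutator `[∇^⊥Λ^{-1}, ∇ψ]` maps `Ḣ^{-1/2}(𝕋²)`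
to `Ḣ^{1/2}(𝕋²)`: `‖[∇^⊥Λ^{-1},∇ψ]f‖_{Ḣ^{1/2}} ≲_ψ ‖f‖_{Ḣ^{-1/2}}`. -/
theorem commutator_gains_one_derivative
    (Sψ : Finset (ℤ × ℤ)) (d : ℤ × ℤ → ℂ) (hd : ∀ k ∉ Sψ, d k = 0) :
    ∃ C : ℝ, 0 < C ∧
      ∀ S : Finset (ℤ × ℤ), ((0, 0) : ℤ × ℤ) ∉ S →
      ∀ c : ℤ × ℤ → ℂ,
      Real.sqrt (hsNormSq (1 / 2) (S + Sψ) (commCoef S c d))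
        ≤ C * Real.sqrt (hsNormSq (-(1 / 2)) S c) := by
  classical
  set D2 := ∑ j ∈ Sψ, ‖d j‖ ^ 2 with hD2def
  set B4 := ∑ j ∈ Sψ, nrm j ^ 4 with hB4def
  have hD2n : 0 ≤ D2 := Finset.sum_nonneg fun j _ => by positivity
  have hB4n : 0 ≤ B4 := Finset.sum_nonneg fun j _ => pow_nonneg (nrm_nonneg j) 4
  set K := 16 * D2 * B4 * (Sψ.card : ℝ) with hKdef
  have hKn : 0 ≤ K := by
    have : (0:ℝ) ≤ (Sψ.card : ℝ) := Nat.cast_nonneg _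
    have h16 : (0:ℝ) ≤ 16 := by norm_num
    exact mul_nonneg (mul_nonneg (mul_nonneg h16 hD2n) hB4n) this
  refine ⟨Real.sqrt K + 1, by positivity, ?_⟩
  intro S hS c
  set N := ∑ k ∈ S, (nrm k)⁻¹ * ‖c k‖ ^ 2 with hNdef
  have hNn : 0 ≤ N := Finset.sum_nonneg fun k _ => by
    have := nrm_nonneg k; positivity
  have hNeq : hsNormSq (-(1 / 2)) S c = N := by
    unfold hsNormSq
    refine Finset.sum_congr rfl fun k _ => ?_
    rw [show (2:ℝ) * (-(1 / 2)) = -1 by norm_num, Real.rpow_neg_one]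
  have hHeq : hsNormSq (1 / 2) (S + Sψ) (commCoef S c d)
      = ∑ q ∈ S + Sψ, nrm q * ‖commCoef S c d q‖ ^ 2 := by
    unfold hsNormSq
    refine Finset.sum_congr rfl fun q _ => ?_
    rw [show (2:ℝ) * (1 / 2) = 1 by norm_num, Real.rpow_one]
  -- the pointwise (in q) estimate
  have main : ∀ q : ℤ × ℤ, nrm q * ‖commCoef S c d q‖ ^ 2
      ≤ 16 * D2 * B4 * ∑ k ∈ S.filter (fun k => q - k ∈ Sψ), (nrm k)⁻¹ * ‖c k‖ ^ 2 := by
    intro q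
    set P := S.filter (fun k => q - k ∈ Sψ) with hPdef
    have hcomm : commCoef S c d q = ∑ k ∈ P, c k * d (q - k) * mker q k := by
      rw [commCoef]
      refine (Finset.sum_filter_of_ne fun k hk hne => ?_).symm
      by_contra hmem
      exact hne (by simp [hd _ hmem])
    have h1 : ‖commCoef S c d q‖ ≤ ∑ k ∈ P, ‖d (q - k)‖ * (‖c k‖ * ‖mker q k‖) := by
      rw [hcomm]
      refine (norm_sum_le _ _).trans (Finset.sum_le_sum fun k _ => le_of_eq ?_)
      rw [norm_mul, norm_mul]; ring
    have h2 : ‖commCoef S c d q‖ ^ 2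
        ≤ (∑ k ∈ P, ‖d (q - k)‖ ^ 2) * (∑ k ∈ P, (‖c k‖ * ‖mker q k‖) ^ 2) :=
      (pow_le_pow_left₀ (norm_nonneg _) h1 2).trans
        (Finset.sum_mul_sq_le_sq_mul_sq _ _ _)
    have hDsum : ∑ k ∈ P, ‖d (q - k)‖ ^ 2 ≤ D2 := by
      have himg : ∑ k ∈ P, ‖d (q - k)‖ ^ 2
          = ∑ j ∈ P.image (fun k => q - k), ‖d j‖ ^ 2 :=
        (Finset.sum_image (f := fun j => ‖d j‖ ^ 2) (g := fun k => q - k)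
          fun a _ b _ h => sub_right_injective h).symm
      rw [himg]
      refine Finset.sum_le_sum_of_subset_of_nonneg ?_ fun j _ _ => by positivity
      intro j hj
      obtain ⟨k, hk, rfl⟩ := Finset.mem_image.mp hj
      exact (Finset.mem_filter.mp hk).2
    have hterm : ∀ k ∈ P, nrm q * (‖c k‖ * ‖mker q k‖) ^ 2
        ≤ 16 * B4 * ((nrm k)⁻¹ * ‖c k‖ ^ 2) := by
      intro k hk
      obtain ⟨hkS, hkψ⟩ := Finset.mem_filter.mp hk
      have hk0 : k ≠ 0 := by
        rintro rfl; exact hS hkS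
      have hb := mker_key (q := q) hk0
      have hB4k : nrm (q - k) ^ 4 ≤ B4 :=
        Finset.single_le_sum (f := fun j => nrm j ^ 4)
          (fun j _ => pow_nonneg (nrm_nonneg j) 4) hkψ
      have hkinv : (0:ℝ) ≤ (nrm k)⁻¹ := inv_nonneg.mpr (nrm_nonneg k)
      calc nrm q * (‖c k‖ * ‖mker q k‖) ^ 2
          = ‖c k‖ ^ 2 * (nrm q * ‖mker q k‖ ^ 2) := by ring
        _ ≤ ‖c k‖ ^ 2 * (16 * nrm (q - k) ^ 4 * (nrm k)⁻¹) :=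
            mul_le_mul_of_nonneg_left hb (by positivity)
        _ ≤ ‖c k‖ ^ 2 * (16 * B4 * (nrm k)⁻¹) := by
            refine mul_le_mul_of_nonneg_left ?_ (by positivity)
            exact mul_le_mul_of_nonneg_right (by nlinarith) hkinv
        _ = 16 * B4 * ((nrm k)⁻¹ * ‖c k‖ ^ 2) := by ring
    have hgsum : (0:ℝ) ≤ ∑ k ∈ P, nrm q * (‖c k‖ * ‖mker q k‖) ^ 2 :=
      Finset.sum_nonneg fun k _ => mul_nonneg (nrm_nonneg q) (by positivity)
    calc nrm q * ‖commCoef S c d q‖ ^ 2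
        ≤ nrm q * ((∑ k ∈ P, ‖d (q - k)‖ ^ 2) * (∑ k ∈ P, (‖c k‖ * ‖mker q k‖) ^ 2)) :=
          mul_le_mul_of_nonneg_left h2 (nrm_nonneg q)
      _ = (∑ k ∈ P, ‖d (q - k)‖ ^ 2) * (∑ k ∈ P, nrm q * (‖c k‖ * ‖mker q k‖) ^ 2) := by
          rw [← Finset.mul_sum]; ring
      _ ≤ D2 * (∑ k ∈ P, 16 * B4 * ((nrm k)⁻¹ * ‖c k‖ ^ 2)) := by
          refine mul_le_mul hDsum (Finset.sum_le_sum hterm) hgsum hD2n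
      _ = 16 * D2 * B4 * ∑ k ∈ P, (nrm k)⁻¹ * ‖c k‖ ^ 2 := by
          rw [← Finset.mul_sum]; ring
  -- summing over q and double counting
  have swap : ∑ q ∈ S + Sψ, ∑ k ∈ S.filter (fun k => q - k ∈ Sψ), (nrm k)⁻¹ * ‖c k‖ ^ 2
      ≤ (Sψ.card : ℝ) * N := by
    have e1 : ∀ q : ℤ × ℤ, ∑ k ∈ S.filter (fun k => q - k ∈ Sψ), (nrm k)⁻¹ * ‖c k‖ ^ 2
        = ∑ k ∈ S, if q - k ∈ Sψ then (nrm k)⁻¹ * ‖c k‖ ^ 2 else 0 := fun q =>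
      Finset.sum_filter _ _
    calc ∑ q ∈ S + Sψ, ∑ k ∈ S.filter (fun k => q - k ∈ Sψ), (nrm k)⁻¹ * ‖c k‖ ^ 2
        = ∑ q ∈ S + Sψ, ∑ k ∈ S, if q - k ∈ Sψ then (nrm k)⁻¹ * ‖c k‖ ^ 2 else 0 :=
          Finset.sum_congr rfl fun q _ => e1 q
      _ = ∑ k ∈ S, ∑ q ∈ S + Sψ, if q - k ∈ Sψ then (nrm k)⁻¹ * ‖c k‖ ^ 2 else 0 :=
          Finset.sum_comm
      _ = ∑ k ∈ S, (((S + Sψ).filter (fun q => q - k ∈ Sψ)).card : ℝ)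
            * ((nrm k)⁻¹ * ‖c k‖ ^ 2) := by
          refine Finset.sum_congr rfl fun k _ => ?_
          rw [← Finset.sum_filter, Finset.sum_const, nsmul_eq_mul]
      _ ≤ ∑ k ∈ S, (Sψ.card : ℝ) * ((nrm k)⁻¹ * ‖c k‖ ^ 2) := by
          refine Finset.sum_le_sum fun k _ => ?_
          refine mul_le_mul_of_nonneg_right ?_ ?_
          · exact_mod_cast Finset.card_le_card_of_injOn (fun q => q - k)
              (fun q hq => (Finset.mem_filter.mp hq).2)
              (fun a _ b _ h => by exact sub_left_injective h)
          · have := nrm_nonneg k; positivity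
      _ = (Sψ.card : ℝ) * N := by rw [hNdef, Finset.mul_sum]
  have total : hsNormSq (1 / 2) (S + Sψ) (commCoef S c d) ≤ K * hsNormSq (-(1 / 2)) S c := by
    rw [hHeq, hNeq]
    calc ∑ q ∈ S + Sψ, nrm q * ‖commCoef S c d q‖ ^ 2
        ≤ ∑ q ∈ S + Sψ, 16 * D2 * B4
            * ∑ k ∈ S.filter (fun k => q - k ∈ Sψ), (nrm k)⁻¹ * ‖c k‖ ^ 2 :=
          Finset.sum_le_sum fun q _ => main q
      _ = 16 * D2 * B4 * ∑ q ∈ S + Sψ,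
            ∑ k ∈ S.filter (fun k => q - k ∈ Sψ), (nrm k)⁻¹ * ‖c k‖ ^ 2 :=
          (Finset.mul_sum _ _ _).symm
      _ ≤ 16 * D2 * B4 * ((Sψ.card : ℝ) * N) := by
          refine mul_le_mul_of_nonneg_left swap ?_
          exact mul_nonneg (mul_nonneg (by norm_num) hD2n) hB4n
      _ = K * N := by rw [hKdef]; ring
  calc Real.sqrt (hsNormSq (1 / 2) (S + Sψ) (commCoef S c d))
      ≤ Real.sqrt (K * hsNormSq (-(1 / 2)) S c) := Real.sqrt_le_sqrt total
    _ = Real.sqrt K * Real.sqrt (hsNormSq (-(1 / 2)) S c) := Real.sqrt_mul hKn _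
    _ ≤ (Real.sqrt K + 1) * Real.sqrt (hsNormSq (-(1 / 2)) S c) := by
        have h1 := Real.sqrt_nonneg (hsNormSq (-(1 / 2)) S c)
        nlinarith
end
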